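/- Let A be a complex Banach algebra with identity and let a, b, c ∈ A. Suppose a is Hirano invertible, cb is strongly Drazin invertible with strongly Drazin inverse (cb)^D, acb = cba, and (cb)^D a = 0. Then the 2×2 matrix with rows (a, c) and (b, 0) is Hirano invertible in M₂(A). -/

import Mathlib

/-- An element of a ring is *Hirano invertible* if there exists `x` with
`a * x = x * a`, `x = x * a * x`, and `a ^ 2 - a * x` nilpotent. -/
def IsHirano {R : Type*} [Ring R] (a : R) : Prop :=
  ∃ x : R, a * x = x * a ∧ x = x * a * x ∧ IsNilpotent (a ^ 2 - a * x)

/-- `y` is the *strongly Drazin inverse* of `b`: `b * y = y * b`, `y = y * b * y`,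
and `b - b * y` is nilpotent. -/
def IsSDrazinInv {R : Type*} [Ring R] (b y : R) : Prop :=
  b * y = y * b ∧ y = y * b * y ∧ IsNilpotent (b - b * y)

/-- Nilpotency reflects from the ambient ring into a subalgebra. -/
lemma nilpotent_of_coe {R : Type*} [Ring R] {S : Subalgebra ℤ R} {x : S}
    (h : IsNilpotent (x : R)) : IsNilpotent x := by
  obtain ⟨n, hn⟩ := h
  refine ⟨n, Subtype.ext ?_⟩
  push_cast
  exact hn

/-- If `x ^ 2 = u * x - w` with `u`, `w` nilpotent and suitably commuting, `x` is nilpotent. -/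
lemma isNilpotent_of_sq_eq {R : Type*} [Ring R] {x u w : R} (hux : Commute u x)
    (hwx : Commute w x) (huw : Commute u w) (hu : IsNilpotent u) (hw : IsNilpotent w)
    (h : x ^ 2 = u * x - w) : IsNilpotent x := by
  have h1 : IsNilpotent (u * x) := hux.isNilpotent_mul_right hu
  have h2 : IsNilpotent (x ^ 2) := by
    rw [h]
    exact Commute.isNilpotent_sub (Commute.mul_left huw hwx.symm) h1 hw
  obtain ⟨n, hn⟩ := h2
  exact ⟨2 * n, by rw [pow_mul, hn]⟩

lemma isNilpotent_of_sq_eq_smul {R M : Type*} [CommRing R] [Ring M] [Algebra R M]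
    {x : M} {t δ : R} (h : x ^ 2 = t • x - δ • (1 : M)) (ht : IsNilpotent t)
    (hδ : IsNilpotent δ) : IsNilpotent x := by
  have h' : x ^ 2 = algebraMap R M t * x - algebraMap R M δ := by
    rw [h, Algebra.smul_def, Algebra.smul_def, mul_one]
  exact isNilpotent_of_sq_eq (Algebra.commutes t x) (Algebra.commutes δ x)
    (Algebra.commutes t _) (ht.map (algebraMap R M)) (hδ.map (algebraMap R M)) h'

/-- Core construction over a commutative ring. -/
lemma exists_hirano_core {R : Type*} [CommRing R] (a : R) (h : IsNilpotent (a - a ^ 3)) :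
    ∃ x : R, x * a * x = x ∧ IsNilpotent (a ^ 2 - a * x) := by
  obtain ⟨K, hK0⟩ := h
  have hK : (a - a ^ 3) ^ (K + 1) = 0 := by rw [pow_succ, hK0, zero_mul]
  set u : R := (a ^ 2) ^ (K + 1) + (1 - a ^ 2) ^ (K + 1) with hu_def
  let π : R →+* R ⧸ nilradical R := Ideal.Quotient.mk (nilradical R)
  have hπ : ∀ z : R, π z = 0 → IsNilpotent z := fun z hz =>
    mem_nilradical.mp (Ideal.Quotient.eq_zero_iff_mem.mp hz)
  have hra : π a ^ 3 = π a := by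
    have h0 : π (a - a ^ 3) = 0 :=
      Ideal.Quotient.eq_zero_iff_mem.mpr (mem_nilradical.mpr ⟨K + 1, hK⟩)
    rw [map_sub, map_pow, sub_eq_zero] at h0
    exact h0.symm
  have hidem : IsIdempotentElem (π a ^ 2) := by
    show π a ^ 2 * π a ^ 2 = π a ^ 2
    have e1 : π a ^ 2 * π a ^ 2 = π a ^ 3 * π a := by ring
    rw [e1, hra, ← pow_two]
  have hπu : π u = 1 := by
    have h1 : (π a ^ 2) ^ (K + 1) = π a ^ 2 := hidem.pow_succ_eq K
    have h2 : (1 - π a ^ 2) ^ (K + 1) = 1 - π a ^ 2 := hidem.one_sub.pow_succ_eq K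
    rw [hu_def]
    simp only [map_add, map_pow, map_sub, map_one]
    rw [h1, h2]
    ring
  have hu_unit : IsUnit u := by
    have hnil : IsNilpotent (u - 1) := hπ _ (by rw [map_sub, hπu, map_one, sub_self])
    have := hnil.isUnit_one_add
    simpa using this
  obtain ⟨U, hU⟩ := hu_unit
  set v : R := ((U⁻¹ : Rˣ) : R) with hv_def
  have hv : v * u = 1 := by rw [hv_def, ← hU]; exact U.inv_mul
  have hv' : v * ((a ^ 2) ^ (K + 1) + (1 - a ^ 2) ^ (K + 1)) = 1 := by rw [← hu_def]; exact hv
  have hπv : π v = 1 := by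
    have hc := congrArg π hv
    rw [map_mul, hπu, mul_one, map_one] at hc
    exact hc
  have key : a ^ (2 * K + 1) * (1 - a ^ 2) ^ (K + 1) = 0 := by
    have e1 : a * (1 - a ^ 2) = a - a ^ 3 := by ring
    have e2 : a ^ (2 * K + 1) * (1 - a ^ 2) ^ (K + 1)
        = a ^ K * ((a * (1 - a ^ 2)) ^ (K + 1)) := by
      rw [mul_pow, ← mul_assoc, ← pow_add, show K + (K + 1) = 2 * K + 1 from by omega]
    rw [e2, e1, hK, mul_zero]
  refine ⟨a ^ (2 * K + 1) * v, ?_, ?_⟩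
  · linear_combination (a ^ (2 * K + 1) * v) * hv' - (v * v) * key
  · refine hπ _ ?_
    rw [map_sub, map_mul, map_mul, map_pow, map_pow, hπv, mul_one]
    have e3 : π a * π a ^ (2 * K + 1) = (π a ^ 2) ^ (K + 1) := by
      rw [← pow_succ', ← pow_mul, show 2 * (K + 1) = 2 * K + 1 + 1 from by omega]
    rw [e3, hidem.pow_succ_eq K, sub_self]

/-- A ring element with `a - a ^ 3` nilpotent is Hirano invertible. -/
lemma isHirano_of_nilpotent {R : Type*} [Ring R] {a : R} (h : IsNilpotent (a - a ^ 3)) :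
    IsHirano a := by
  let S : Subalgebra ℤ R := Algebra.adjoin ℤ {a}
  letI : CommRing S := Algebra.adjoinCommRingOfComm ℤ (by
    rintro x hx y hy
    rw [Set.mem_singleton_iff] at hx hy
    subst hx; subst hy; rfl)
  have haS : a ∈ S := Algebra.subset_adjoin rfl
  set a' : S := ⟨a, haS⟩ with ha'
  have hcoe : ((a' - a' ^ 3 : S) : R) = a - a ^ 3 := by push_cast; rfl
  have h' : IsNilpotent (a' - a' ^ 3) := nilpotent_of_coe (by rw [hcoe]; exact h)
  obtain ⟨x', hx1, hx2⟩ := exists_hirano_core a' h'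
  refine ⟨(x' : R), ?_, ?_, ?_⟩
  · simpa using congrArg Subtype.val (mul_comm a' x')
  · simpa using (congrArg Subtype.val hx1).symm
  · have h3 := hx2.map S.val.toRingHom
    simpa using h3

/-- Strongly Drazin invertible elements satisfy `d - d ^ 2` nilpotent. -/
lemma isNilpotent_sub_sq_of_sdrazin {R : Type*} [Ring R] {d y : R} (h : IsSDrazinInv d y) :
    IsNilpotent (d - d ^ 2) := by
  obtain ⟨hdy, hyd, hnil⟩ := h
  have hid : (d * y) * (d * y) = d * y := by
    have e1 : d * y * (d * y) = d * (y * d * y) := by noncomm_ring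
    rw [e1, ← hyd]
  have key : d - d ^ 2 = (d - d * y) * (1 - d * y - d) := by
    have e2 : (d - d * y) * (1 - d * y - d)
        = d - d * (d * y) - d * d - d * y + (d * y) * (d * y) + (d * y) * d := by noncomm_ring
    have e3 : (d * y) * d = d * (d * y) := by rw [mul_assoc, ← hdy]
    rw [e2, e3, hid]
    noncomm_ring
  have cdy : Commute d y := hdy
  have c1 : Commute d (d * y) := (Commute.refl d).mul_right cdy
  have cA : Commute (d - d * y) d := Commute.sub_left (Commute.refl d) c1.symm
  have cB : Commute (d - d * y) (d * y) := Commute.sub_left c1 (Commute.refl (d * y))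
  have hcomm : Commute (d - d * y) (1 - d * y - d) :=
    ((Commute.one_right _).sub_right cB).sub_right cA
  rw [key]
  exact hcomm.isNilpotent_mul_right hnil

/-- Hirano invertible elements satisfy `a - a ^ 3` nilpotent. -/
lemma isNilpotent_of_isHirano {R : Type*} [Ring R] {a : R} (h : IsHirano a) :
    IsNilpotent (a - a ^ 3) := by
  obtain ⟨x, hax, hxax, hnil⟩ := h
  set e := a * x with he
  have cax : Commute a x := hax
  have cae : Commute a e := (Commute.refl a).mul_right cax
  have hee : e * e = e := by
    have e1 : a * x * (a * x) = a * (x * a * x) := by noncomm_ring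
    rw [he, e1, ← hxax]
  obtain ⟨n, hn0⟩ := hnil
  have hn : (a ^ 2 - a * x) ^ (n + 1) = 0 := by rw [pow_succ, hn0, zero_mul]
  have hie : IsIdempotentElem (1 - e) := (show IsIdempotentElem e from hee).one_sub
  have c_a_1e : Commute a (1 - e) := (Commute.one_right a).sub_right cae
  have c_sq_1e : Commute (a ^ 2 - e) (1 - e) :=
    (Commute.one_right _).sub_right (Commute.sub_left (cae.pow_left 2) (Commute.refl e))
  have h1 : IsNilpotent (a * (1 - e)) := by
    refine ⟨2 * (n + 1), ?_⟩
    have step1 : (a * (1 - e)) ^ 2 = (a ^ 2 - e) * (1 - e) := by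
      rw [c_a_1e.mul_pow, hie.pow_succ_eq 1]
      have e4 : (a ^ 2 - e) * (1 - e) = a ^ 2 * (1 - e) - (e - e * e) := by noncomm_ring
      rw [e4, hee, sub_self, sub_zero]
    rw [pow_mul, step1, c_sq_1e.mul_pow, hn, zero_mul]
  have c_a_sq : Commute a (a ^ 2 - e) := ((Commute.refl a).pow_right 2).sub_right cae
  have h2 : IsNilpotent (a * (a ^ 2 - e)) := c_a_sq.isNilpotent_mul_left ⟨n + 1, hn⟩
  have key : a - a ^ 3 = a * (1 - e) - a * (a ^ 2 - e) := by noncomm_ring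
  have c_1e_e : Commute (1 - e) e := (Commute.one_left e).sub_left (Commute.refl e)
  have c_1e_sq : Commute (1 - e) (a ^ 2 - e) := ((c_a_1e.symm.pow_right 2)).sub_right c_1e_e
  have ccomm : Commute (a * (1 - e)) (a * (a ^ 2 - e)) :=
    Commute.mul_left ((Commute.refl a).mul_right c_a_sq)
      (Commute.mul_right c_a_1e.symm c_1e_sq)
  rw [key]
  exact Commute.isNilpotent_sub ccomm h1 h2

lemma pow_shuffle {M : Type*} [Monoid M] (x y : M) (n : ℕ) :
    (x * y) ^ (n + 1) = x * (y * x) ^ n * y := by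
  induction n with
  | zero => simp
  | succ n ih =>
    rw [pow_succ, ih, pow_succ]
    simp only [mul_assoc]


set_option maxHeartbeats 1000000 in
set_option synthInstance.maxHeartbeats 200000 in
lemma X_nilpotent {A : Type*} [Ring A] (a d : A) (had : a * d = d * a)
    (hν : IsNilpotent (a - a ^ 3)) (hβ : IsNilpotent (d - d ^ 2))
    (hnad : IsNilpotent (a * d)) :
    IsNilpotent (!![a - a ^ 3 - (a * d + a * d), (1 - a ^ 2 - d) * d;
      1 - a ^ 2 - d, -(a * d)] : Matrix (Fin 2) (Fin 2) A) := by
  set S : Subalgebra ℤ A := Algebra.adjoin ℤ {a, d} with hS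
  letI : CommRing S := Algebra.adjoinCommRingOfComm ℤ (by
    rintro x hx y hy
    simp only [Set.mem_insert_iff, Set.mem_singleton_iff] at hx hy
    rcases hx with rfl | rfl <;> rcases hy with rfl | rfl
    · rfl
    · exact had
    · exact had.symm
    · rfl)
  have haS : a ∈ S := Algebra.subset_adjoin (Set.mem_insert _ _)
  have hdS : d ∈ S := Algebra.subset_adjoin (Set.mem_insert_of_mem _ rfl)
  set a' : S := ⟨a, haS⟩ with ha'
  set d' : S := ⟨d, hdS⟩ with hd'
  have hν' : IsNilpotent (a' - a' ^ 3) := by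
    refine nilpotent_of_coe (x := a' - a' ^ 3) ?_
    have : ((a' - a' ^ 3 : S) : A) = a - a ^ 3 := by push_cast; rfl
    rw [this]; exact hν
  have hβ' : IsNilpotent (d' - d' ^ 2) := by
    refine nilpotent_of_coe (x := d' - d' ^ 2) ?_
    have : ((d' - d' ^ 2 : S) : A) = d - d ^ 2 := by push_cast; rfl
    rw [this]; exact hβ
  have had' : IsNilpotent (a' * d') := by
    refine nilpotent_of_coe (x := a' * d') ?_
    have : ((a' * d' : S) : A) = a * d := by push_cast; rfl
    rw [this]; exact hnad
  have ht' : IsNilpotent ((a' - a' ^ 3 - (a' * d' + a' * d')) - a' * d') := by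
    have e1 : (a' - a' ^ 3 - (a' * d' + a' * d')) - a' * d' = (a' - a' ^ 3) - 3 * (a' * d') := by ring
    rw [e1]
    exact Commute.isNilpotent_sub (Commute.all _ _) hν'
      ((Commute.all _ _).isNilpotent_mul_left had')
  have hsd' : IsNilpotent ((1 - a' ^ 2 - d') * d') := by
    have e1 : (1 - a' ^ 2 - d') * d' = (d' - d' ^ 2) - a' * (a' * d') := by ring
    rw [e1]
    exact Commute.isNilpotent_sub (Commute.all _ _) hβ'
      ((Commute.all _ _).isNilpotent_mul_left had')
  have hδ' : IsNilpotent (-((a' - a' ^ 3 - (a' * d' + a' * d')) * (a' * d'))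
      - (1 - a' ^ 2 - d') * (1 - a' ^ 2 - d') * d') := by
    refine Commute.isNilpotent_sub (Commute.all _ _) ?_ ?_
    · exact ((Commute.all _ _).isNilpotent_mul_left had').neg
    · have e1 : (1 - a' ^ 2 - d') * (1 - a' ^ 2 - d') * d'
          = (1 - a' ^ 2 - d') * ((1 - a' ^ 2 - d') * d') := by ring
      rw [e1]
      exact (Commute.all _ _).isNilpotent_mul_left hsd'
  set Xs : Matrix (Fin 2) (Fin 2) S :=
    !![a' - a' ^ 3 - (a' * d' + a' * d'), (1 - a' ^ 2 - d') * d';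
       1 - a' ^ 2 - d', -(a' * d')] with hXs
  have hXs2 : Xs ^ 2 = ((a' - a' ^ 3 - (a' * d' + a' * d')) - a' * d') • Xs
      - (-((a' - a' ^ 3 - (a' * d' + a' * d')) * (a' * d'))
        - (1 - a' ^ 2 - d') * (1 - a' ^ 2 - d') * d') • (1 : Matrix (Fin 2) (Fin 2) S) := by
    rw [hXs]
    refine Matrix.ext fun i j => ?_
    fin_cases i <;> fin_cases j <;>
      simp only [pow_two, Matrix.mul_apply, Fin.sum_univ_two, Matrix.smul_apply,
        Matrix.sub_apply, Matrix.one_apply, smul_eq_mul, Matrix.cons_val', Matrix.cons_val_zero,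
        Matrix.cons_val_one, Matrix.head_cons, Matrix.head_fin_const, Matrix.empty_val',
        Matrix.cons_val_fin_one, Fin.isValue] <;>
      norm_num <;> ring
  have hXsnil : IsNilpotent Xs := isNilpotent_of_sq_eq_smul hXs2 ht' hδ'
  obtain ⟨m, hm⟩ := hXsnil
  refine ⟨m, ?_⟩
  have hφX : (S.val.toRingHom.mapMatrix :
      Matrix (Fin 2) (Fin 2) S →+* Matrix (Fin 2) (Fin 2) A) Xs
      = !![a - a ^ 3 - (a * d + a * d), (1 - a ^ 2 - d) * d;
          1 - a ^ 2 - d, -(a * d)] := by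
    rw [hXs]
    ext i j
    fin_cases i <;> fin_cases j <;>
      simp [RingHom.mapMatrix_apply, Matrix.map_apply, ha', hd']
  rw [← hφX, ← map_pow, hm, map_zero]

set_option maxHeartbeats 1000000 in
/-- If `a` is Hirano invertible, `c * b` is strongly Drazin invertible with strong
Drazin inverse `cbD`, `a * c * b = c * b * a` and `cbD * a = 0`, then
`!![a, c; b, 0]` is Hirano invertible in `M₂(A)`. -/
theorem hirano_anti_triangular_cb {A : Type*} [NormedRing A] [NormedAlgebra ℂ A]
    [CompleteSpace A] (a b c cbD : A) (ha : IsHirano a) (hcb : IsSDrazinInv (c * b) cbD)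
    (h1 : a * c * b = c * b * a) (h2 : cbD * a = 0) :
    IsHirano (!![a, c; b, (0 : A)] : Matrix (Fin 2) (Fin 2) A) := by
  obtain ⟨hdy, hyd, hw⟩ := hcb
  set d := c * b with hd
  have hd' : d = c * b := hd
  clear_value d
  have h1' : a * c * b = c * b * a := by rw [hd'] at h1; exact h1
  have had : a * d = d * a := by rw [hd', ← mul_assoc]; exact h1'
  have hν : IsNilpotent (a - a ^ 3) := isNilpotent_of_isHirano ha
  have hβ : IsNilpotent (d - d ^ 2) := isNilpotent_sub_sq_of_sdrazin ⟨hdy, hyd, hw⟩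
  -- `d ^ k * a = 0` for some `k`
  obtain ⟨k, hk⟩ := hw
  have cw : Commute (d - d * cbD) d := by
    show (d - d * cbD) * d = d * (d - d * cbD)
    rw [sub_mul, mul_sub, mul_assoc d cbD d, ← hdy, ← mul_assoc d d cbD]
  have hda : ∀ j : ℕ, d ^ j * a = (d - d * cbD) ^ j * a := by
    intro j
    induction j with
    | zero => simp
    | succ j ih =>
      have hwa : d * a = (d - d * cbD) * a := by
        rw [sub_mul, mul_assoc d cbD a, h2, mul_zero, sub_zero]
      calc d ^ (j + 1) * a = d ^ j * (d * a) := by rw [pow_succ, mul_assoc (d ^ j) d a]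
        _ = d ^ j * ((d - d * cbD) * a) := by rw [hwa]
        _ = (d - d * cbD) * (d ^ j * a) := by
              rw [← mul_assoc (d ^ j) (d - d * cbD) a, ← (cw.pow_right j).eq,
                mul_assoc (d - d * cbD) (d ^ j) a]
        _ = (d - d * cbD) * ((d - d * cbD) ^ j * a) := by rw [ih]
        _ = (d - d * cbD) ^ (j + 1) * a := by
              rw [pow_succ', mul_assoc (d - d * cbD) ((d - d * cbD) ^ j) a]
  have hka : d ^ k * a = 0 := by rw [hda k, hk, zero_mul]
  have cad : Commute a d := had
  have hnad : IsNilpotent (a * d) := by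
    refine ⟨k + 1, ?_⟩
    calc (a * d) ^ (k + 1) = (d * a) ^ (k + 1) := by rw [had]
      _ = d ^ (k + 1) * a ^ (k + 1) := (cad.symm).mul_pow (k + 1)
      _ = d * ((d ^ k * a) * a ^ k) := by rw [pow_succ' d, pow_succ' a]; noncomm_ring
      _ = 0 := by rw [hka, zero_mul, mul_zero]
  have hXnil0 : IsNilpotent (!![a - a ^ 3 - (a * d + a * d), (1 - a ^ 2 - d) * d;
      1 - a ^ 2 - d, -(a * d)] : Matrix (Fin 2) (Fin 2) A) :=
    X_nilpotent a d had hν hβ hnad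
  -- transfer to `A`
  obtain ⟨m, hXnil⟩ := hXnil0
  set p : A := a - a ^ 3 - (a * d + a * d) with hp
  set s : A := 1 - a ^ 2 - d with hs
  set X : Matrix (Fin 2) (Fin 2) A := !![p, s * d; s, -(a * d)] with hX
  -- factorization of `M - M ^ 3`
  set Mm : Matrix (Fin 2) (Fin 2) A := !![a, c; b, (0 : A)] with hMm
  set L : Matrix (Fin 2) (Fin 2) A := !![1, 0; 0, b] with hL
  set Nn : Matrix (Fin 2) (Fin 2) A := !![p, s * c; s, -(a * c)] with hNn
  have hM3 : Mm ^ 3 = Mm * Mm * Mm := by rw [pow_succ, pow_succ, pow_one]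
  have hMLN : Mm - Mm ^ 3 = L * Nn := by
    have h1r : a * (c * b) = c * (b * a) := by
      rw [← mul_assoc, ← mul_assoc]; exact h1'
    rw [hM3, hMm, hL, hNn, Matrix.mul_fin_two, Matrix.mul_fin_two, Matrix.mul_fin_two]
    refine Matrix.ext fun i j => ?_
    fin_cases i <;> fin_cases j <;>
      simp [hp, hs, hd', ← mul_assoc] <;> (try rw [h1']) <;> noncomm_ring
  have hNL : Nn * L = X := by
    rw [hNn, hL, hX, Matrix.mul_fin_two]
    refine Matrix.ext fun i j => ?_
    fin_cases i <;> fin_cases j <;>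
      simp [hp, hs, hd'] <;> noncomm_ring
  have hnilM : IsNilpotent (Mm - Mm ^ 3) := by
    refine ⟨m + 1, ?_⟩
    rw [hMLN, pow_shuffle, hNL, hXnil, mul_zero, zero_mul]
  exact isHirano_of_nilpotent hnilM
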